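/- Let A be a nonempty finite set, τ > 0, and x, y : A → ℝ. Define the soft-min softmin_τ(x) = −τ log Σ_{a∈A} exp(−x(a)/τ) and the Gibbs distribution π_x(a) = exp(−x(a)/τ)/Σ_{a'∈A} exp(−x(a')/τ). Then Σ_{a∈A} π_x(a)(x(a) − y(a)) ≤ softmin_τ(x) − softmin_τ(y) ≤ Σ_{a∈A} π_y(a)(x(a) − y(a)). -/

import Mathlib

open Finset Real

lemma softmin_one_side
    {A : Type*} [Fintype A] [Nonempty A]
    (τ : ℝ) (hτ : 0 < τ) (x y : A → ℝ) :
    (-τ * Real.log (∑ a, Real.exp (-x a / τ))) -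
        (-τ * Real.log (∑ a, Real.exp (-y a / τ))) ≤
      ∑ a, (Real.exp (-y a / τ) / ∑ a', Real.exp (-y a' / τ)) * (x a - y a) := by
  set Sx := ∑ a, Real.exp (-x a / τ) with hSx
  set Sy := ∑ a, Real.exp (-y a / τ) with hSy
  have hSxpos : 0 < Sx := Finset.sum_pos (fun a _ => Real.exp_pos _) Finset.univ_nonempty
  have hSypos : 0 < Sy := Finset.sum_pos (fun a _ => Real.exp_pos _) Finset.univ_nonempty
  set w : A → ℝ := fun a => Real.exp (-y a / τ) / Sy with hw
  set p : A → ℝ := fun a => (y a - x a) / τ with hp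
  have hw1 : ∑ a, w a = 1 := by
    rw [hw]
    simp only [← Finset.sum_div]
    field_simp
    simp only [hSy, neg_div]
  have hjensen : Real.exp (∑ a, w a • p a) ≤ ∑ a, w a • Real.exp (p a) :=
    convexOn_exp.map_sum_le (fun i _ => by positivity) hw1 (fun i _ => Set.mem_univ _)
  have hsum : ∑ a, w a • Real.exp (p a) = Sx / Sy := by
    rw [hSx, Finset.sum_div]
    apply Finset.sum_congr rfl
    intro a _
    rw [hw, hp]
    simp only [smul_eq_mul]
    rw [div_mul_eq_mul_div, ← Real.exp_add]
    congr 2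
    ring
  rw [hsum] at hjensen
  have hlog : ∑ a, w a • p a ≤ Real.log Sx - Real.log Sy := by
    have := Real.log_le_log (Real.exp_pos _) hjensen
    rwa [Real.log_exp, Real.log_div hSxpos.ne' hSypos.ne'] at this
  have hmul := mul_le_mul_of_nonneg_left hlog hτ.le
  have hexp : τ * ∑ a, w a • p a = ∑ a, w a * (y a - x a) := by
    rw [Finset.mul_sum]
    apply Finset.sum_congr rfl
    intro a _
    rw [hp]; simp only [smul_eq_mul]; field_simp
  rw [hexp] at hmul
  simp only [hw] at hmul
  have : ∑ a, Real.exp (-y a / τ) / Sy * (x a - y a)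
      = -(∑ a, Real.exp (-y a / τ) / Sy * (y a - x a)) := by
    rw [← Finset.sum_neg_distrib]
    apply Finset.sum_congr rfl; intro a _; ring
  rw [this]
  linarith

theorem softmin_diff_bounds
    {A : Type*} [Fintype A] [Nonempty A]
    (τ : ℝ) (hτ : 0 < τ) (x y : A → ℝ) :
    (∑ a, (Real.exp (-x a / τ) / ∑ a', Real.exp (-x a' / τ)) * (x a - y a)) ≤
        (-τ * Real.log (∑ a, Real.exp (-x a / τ))) -
          (-τ * Real.log (∑ a, Real.exp (-y a / τ))) ∧
    (-τ * Real.log (∑ a, Real.exp (-x a / τ))) -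
        (-τ * Real.log (∑ a, Real.exp (-y a / τ))) ≤
      ∑ a, (Real.exp (-y a / τ) / ∑ a', Real.exp (-y a' / τ)) * (x a - y a) := by
  constructor
  · have h := softmin_one_side τ hτ y x
    have : ∑ a, Real.exp (-x a / τ) / (∑ a', Real.exp (-x a' / τ)) * (x a - y a)
        = -(∑ a, Real.exp (-x a / τ) / (∑ a', Real.exp (-x a' / τ)) * (y a - x a)) := by
      rw [← Finset.sum_neg_distrib]
      apply Finset.sum_congr rfl; intro a _; ring
    rw [this]
    linarith
  · exact softmin_one_side τ hτ x y
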